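/- Let K be a simplicial complex with complementarity on an n-element vertex set where n is even. Then K has exactly 2^(n-2) faces of odd cardinality (even-dimensional faces) and 2^(n-2) - 1 faces of even cardinality (odd-dimensional faces); consequently the Euler characteristic of K equals 1. -/

import Mathlib

open Finset

/-- `K` is an (abstract) simplicial complex: faces are nonempty finite sets,
closed under passing to nonempty subsets. -/
def IsComplex {V : Type} [DecidableEq V] (K : Finset (Finset V)) : Prop :=
  (∀ σ ∈ K, σ.Nonempty) ∧ ∀ σ ∈ K, ∀ τ ⊆ σ, τ.Nonempty → τ ∈ K

/-- Euler characteristic of a simplicial complex. -/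
def eulerChar {V : Type} [DecidableEq V] (K : Finset (Finset V)) : ℤ :=
  ∑ σ ∈ K, (-1 : ℤ) ^ (σ.card - 1)

/-- Complementarity: exactly one of each complementary pair of nonempty subsets
of the vertex set is a face. -/
def Complementarity {V : Type} [DecidableEq V] [Fintype V] (K : Finset (Finset V)) : Prop :=
  ∀ A : Finset V, A.Nonempty → Aᶜ.Nonempty → (A ∈ K ↔ Aᶜ ∉ K)


lemma card_odd_subsets {V : Type} [DecidableEq V] [Fintype V] [Nonempty V] :
    ((univ : Finset (Finset V)).filter fun A => Odd A.card).card
      = 2 ^ (Fintype.card V - 1) := by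
  obtain ⟨v⟩ := ‹Nonempty V›
  have hbij : ((univ : Finset (Finset V)).filter fun A => Odd A.card).card
      = ((univ : Finset (Finset V)).filter fun A => ¬ Odd A.card).card := by
    apply Finset.card_bij' (fun A _ => if v ∈ A then A.erase v else insert v A)
      (fun A _ => if v ∈ A then A.erase v else insert v A)
    · intro A hA
      by_cases h : v ∈ A <;> simp [h, Finset.insert_erase, Finset.erase_insert]
    · intro A hA
      by_cases h : v ∈ A <;> simp [h, Finset.insert_erase, Finset.erase_insert]
    · intro A hA
      simp only [mem_filter, mem_univ, true_and, Nat.odd_iff] at hA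
      by_cases h : v ∈ A
      · have := card_pos.mpr ⟨v, h⟩
        simp [h, card_erase_of_mem, Nat.odd_iff]; omega
      · simp [h, card_insert_of_notMem, Nat.odd_iff]; omega
    · intro A hA
      simp only [mem_filter, mem_univ, true_and, Nat.odd_iff] at hA
      by_cases h : v ∈ A
      · have := card_pos.mpr ⟨v, h⟩
        simp [h, card_erase_of_mem, Nat.odd_iff]; omega
      · simp [h, card_insert_of_notMem, Nat.odd_iff]; omega
  have htot := Finset.card_filter_add_card_filter_not
    (s := (univ : Finset (Finset V))) (p := fun A => Odd A.card)
  have hcu : (univ : Finset (Finset V)).card = 2 ^ Fintype.card V := by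
    simp [Finset.card_univ]
  have hn1 : 1 ≤ Fintype.card V := Fintype.card_pos
  have hp : 2 ^ Fintype.card V = 2 * 2 ^ (Fintype.card V - 1) := by
    rw [← pow_succ']
    congr 1
    omega
  omega

/-- A complementary simplicial complex on an even number `n` of vertices
has `2^(n-2)` faces of odd cardinality and `2^(n-2) - 1` faces of even cardinality;
consequently its Euler characteristic equals `1`. -/
theorem stmt_1 {V : Type} [DecidableEq V] [Fintype V] [Nonempty V]
    (hn : Even (Fintype.card V))
    (K : Finset (Finset V)) (hK : IsComplex K)
    (hvert : ∀ v : V, ({v} : Finset V) ∈ K)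
    (huniv : (Finset.univ : Finset V) ∉ K)
    (hcomp : Complementarity K) :
    (K.filter fun σ => Odd σ.card).card = 2 ^ (Fintype.card V - 2) ∧
    (K.filter fun σ => Even σ.card).card = 2 ^ (Fintype.card V - 2) - 1 ∧
    eulerChar K = 1 := by
  set n := Fintype.card V with hndef
  have hn1 : 1 ≤ n := Fintype.card_pos
  have hn2 : 2 ≤ n := by
    rcases hn with ⟨k, hk⟩; omega
  have hcard : ∀ A : Finset V, A.card ≤ n := fun A => by
    simpa using card_le_card (subset_univ A)
  have hcc : ∀ A : Finset V, Aᶜ.card = n - A.card := fun A => by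
    simp [card_compl, hndef]
  -- the set of odd-card subsets
  set O : Finset (Finset V) := (univ : Finset (Finset V)).filter (fun A => Odd A.card) with hO
  set E : Finset (Finset V) := (univ : Finset (Finset V)).filter (fun A => Even A.card) with hE
  have hOcard : O.card = 2 ^ (n - 1) := card_odd_subsets
  have hOEcard : O.card + E.card = 2 ^ n := by
    have := Finset.card_filter_add_card_filter_not
      (s := (univ : Finset (Finset V))) (p := fun A => Odd A.card)
    rw [← hO] at this
    have hcu : (univ : Finset (Finset V)).card = 2 ^ n := by
      simp [Finset.card_univ, hndef]
    have heq : E = (univ : Finset (Finset V)).filter (fun A => ¬ Odd A.card) := by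
      rw [hE]; ext A; simp only [mem_filter, Nat.not_odd_iff_even]
    rw [heq]; omega
  have hEcard : E.card = 2 ^ (n - 1) := by
    have hp : 2 ^ n = 2 * 2 ^ (n - 1) := by
      rw [← pow_succ']; congr 1; omega
    omega
  have hp2 : 2 ^ (n - 1) = 2 * 2 ^ (n - 2) := by
    rw [← pow_succ']; congr 1; omega
  have hone : 1 ≤ 2 ^ (n - 2) := Nat.one_le_two_pow
  -- odd faces
  have hOsplit : (K.filter fun σ => Odd σ.card) = O.filter (· ∈ K) := by
    ext A; simp [hO, mem_filter]; tauto
  have hObij : (O.filter (· ∈ K)).card = (O.filter (· ∉ K)).card := by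
    apply Finset.card_bij' (fun A _ => Aᶜ) (fun A _ => Aᶜ)
    · intro A _; simp
    · intro A _; simp
    · intro A hA
      simp only [hO, mem_filter, mem_univ, true_and] at hA ⊢
      obtain ⟨hodd, hAK⟩ := hA
      have hAne : A.Nonempty := card_pos.mp hodd.pos
      have hcodd : Odd Aᶜ.card := by
        rw [hcc]; exact Nat.Even.sub_odd (hcard A) hn hodd
      have hcne : Aᶜ.Nonempty := card_pos.mp hcodd.pos
      exact ⟨hcodd, (hcomp A hAne hcne).mp hAK⟩
    · intro A hA
      simp only [hO, mem_filter, mem_univ, true_and] at hA ⊢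
      obtain ⟨hodd, hAK⟩ := hA
      have hAne : A.Nonempty := card_pos.mp hodd.pos
      have hcodd : Odd Aᶜ.card := by
        rw [hcc]; exact Nat.Even.sub_odd (hcard A) hn hodd
      have hcne : Aᶜ.Nonempty := card_pos.mp hcodd.pos
      refine ⟨hcodd, ?_⟩
      have := hcomp Aᶜ hcne (by simpa using hAne)
      rw [compl_compl] at this
      exact this.mpr hAK
  have hOtot : (O.filter (· ∈ K)).card + (O.filter (· ∉ K)).card = 2 ^ (n - 1) := by
    have := Finset.card_filter_add_card_filter_not (s := O) (p := (· ∈ K))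
    omega
  have goal1 : (K.filter fun σ => Odd σ.card).card = 2 ^ (n - 2) := by
    rw [hOsplit]; omega
  -- even faces
  set EN : Finset (Finset V) := (univ : Finset (Finset V)).filter
    (fun A => Even A.card ∧ A ∉ K ∧ A.Nonempty ∧ A ≠ univ) with hEN
  have hEsplit : (K.filter fun σ => Even σ.card) = E.filter (· ∈ K) := by
    ext A; simp [hE, mem_filter]; tauto
  have hEbij : (E.filter (· ∈ K)).card = EN.card := by
    apply Finset.card_bij' (fun A _ => Aᶜ) (fun A _ => Aᶜ)
    · intro A _; simp
    · intro A _; simp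
    · intro A hA
      simp only [hE, hEN, mem_filter, mem_univ, true_and] at hA ⊢
      obtain ⟨heven, hAK⟩ := hA
      have hAne : A.Nonempty := hK.1 A hAK
      have hAnu : A ≠ univ := fun h => huniv (h ▸ hAK)
      have hlt : A.card < n := by
        have := card_lt_card (ssubset_univ_iff.mpr hAnu)
        simpa using this
      have hcne : Aᶜ.Nonempty := by
        rw [← card_pos, hcc]; omega
      have hceven : Even Aᶜ.card := by
        rw [hcc]; exact Even.tsub hn heven
      refine ⟨hceven, (hcomp A hAne hcne).mp hAK, hcne, ?_⟩
      intro h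
      have : A = ∅ := by simpa using congrArg compl h
      exact hAne.ne_empty this
    · intro A hA
      simp only [hE, hEN, mem_filter, mem_univ, true_and] at hA ⊢
      obtain ⟨heven, hAK, hAne, hAnu⟩ := hA
      have hlt : A.card < n := by
        have := card_lt_card (ssubset_univ_iff.mpr hAnu)
        simpa using this
      have hcne : Aᶜ.Nonempty := by
        rw [← card_pos, hcc]; omega
      have hceven : Even Aᶜ.card := by
        rw [hcc]; exact Even.tsub hn heven
      refine ⟨hceven, ?_⟩
      have := hcomp Aᶜ hcne (by simpa using hAne)
      rw [compl_compl] at this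
      exact this.mpr hAK
  have hEnot : (E.filter (· ∉ K)) = insert ∅ (insert univ EN) := by
    ext A
    simp only [hE, hEN, mem_filter, mem_univ, true_and, mem_insert]
    constructor
    · rintro ⟨heven, hAK⟩
      by_cases h1 : A = ∅
      · exact Or.inl h1
      by_cases h2 : A = univ
      · exact Or.inr (Or.inl h2)
      exact Or.inr (Or.inr ⟨heven, hAK, nonempty_iff_ne_empty.mpr h1, h2⟩)
    · rintro (rfl | rfl | ⟨heven, hAK, _, _⟩)
      · exact ⟨by simp, fun h => (hK.1 ∅ h).ne_empty rfl⟩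
      · exact ⟨by simpa [hndef] using hn, huniv⟩
      · exact ⟨heven, hAK⟩
  have hEnotcard : (E.filter (· ∉ K)).card = EN.card + 2 := by
    rw [hEnot]
    have h1 : (univ : Finset V) ∉ EN := by simp [hEN]
    have h2 : (∅ : Finset V) ∉ insert univ EN := by
      simp [hEN]
      exact fun h => (univ_nonempty.ne_empty h.symm)
    rw [card_insert_of_notMem h2, card_insert_of_notMem h1]
  have hEtot : (E.filter (· ∈ K)).card + (E.filter (· ∉ K)).card = 2 ^ (n - 1) := by
    have := Finset.card_filter_add_card_filter_not (s := E) (p := (· ∈ K))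
    omega
  have goal2 : (K.filter fun σ => Even σ.card).card = 2 ^ (n - 2) - 1 := by
    rw [hEsplit]; omega
  refine ⟨goal1, goal2, ?_⟩
  -- Euler characteristic
  have hsplit := Finset.sum_filter_add_sum_filter_not K (fun σ => Odd σ.card)
    (fun σ => (-1 : ℤ) ^ (σ.card - 1))
  have h1 : ∑ σ ∈ K.filter (fun σ => Odd σ.card), (-1 : ℤ) ^ (σ.card - 1)
      = (K.filter fun σ => Odd σ.card).card := by
    rw [Finset.sum_congr rfl (fun σ hσ => ?_), Finset.sum_const, nsmul_eq_mul, mul_one]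
    · simp only [mem_filter] at hσ
      have : Even (σ.card - 1) := by
        rcases hσ.2 with ⟨k, hk⟩
        exact ⟨k, by omega⟩
      exact this.neg_one_pow
  have h2 : ∑ σ ∈ K.filter (fun σ => ¬ Odd σ.card), (-1 : ℤ) ^ (σ.card - 1)
      = -(K.filter fun σ => Even σ.card).card := by
    have heq : K.filter (fun σ => ¬ Odd σ.card) = K.filter (fun σ => Even σ.card) := by
      ext A; simp only [mem_filter, Nat.not_odd_iff_even]
    rw [heq, Finset.sum_congr rfl (fun σ hσ => ?_), Finset.sum_const, nsmul_eq_mul, mul_neg_one]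
    · simp only [mem_filter] at hσ
      have hpos : 0 < σ.card := card_pos.mpr (hK.1 σ hσ.1)
      have : Odd (σ.card - 1) := by
        rcases hσ.2 with ⟨k, hk⟩
        exact ⟨k - 1, by omega⟩
      simpa using this.neg_one_pow
  have : eulerChar K = ((K.filter fun σ => Odd σ.card).card : ℤ)
      - ((K.filter fun σ => Even σ.card).card : ℤ) := by
    rw [eulerChar, ← hsplit, h1, h2]; ring
  rw [this, goal1, goal2]
  have : ((2 ^ (n - 2) - 1 : ℕ) : ℤ) = (2 ^ (n - 2) : ℤ) - 1 := by
    push_cast [hone]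
    ring
  rw [this]
  push_cast
  ring
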